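/- arXiv:2401.06566 — 3 statements merged into one kernel-verified Lean document; each statement's English description precedes it below -/
import Mathlib

section
/- Given a probability measure ν on X × A with ν^X(x) > 0 for all x, define the policy π_ν(a|x) = ν(x,a)/ν^X(x). If ν satisfies the stationarity conditions ν^X(x) = ∑_{(y,a)} p(x|y,a) π_ν(a|y) ν^X(y) and ν^X = μ_E, and the chain starts from μ_E, then the occupation measure induced by π_ν equals ν: ν_{π_ν} = ν. -/
open scoped BigOperators

/-- The law of the state `x(t)` of the Markov chain with transition kernel
`p` (where `p y a x` is the probability of moving to `x` from `y` under action `a`),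
stationary policy `π` and initial distribution `μ0`. -/
noncomputable def stateLaw {X A : Type*} [Fintype X] [Fintype A]
    (p : X → A → X → ℝ) (π : X → A → ℝ) (μ0 : X → ℝ) : ℕ → X → ℝ
  | 0 => μ0
  | (t + 1) => fun x => ∑ y, ∑ a, p y a x * π y a * stateLaw p π μ0 t y

/-- The law of the state-action pair `(x(t), a(t))`. -/
noncomputable def jointLaw {X A : Type*} [Fintype X] [Fintype A]
    (p : X → A → X → ℝ) (π : X → A → ℝ) (μ0 : X → ℝ) (t : ℕ) (x : X) (a : A) : ℝ :=
  π x a * stateLaw p π μ0 t x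

/-- The normalized discounted state-action occupation measure
`ν_π(x,a) = (1−β) ∑_{t≥0} β^t P[(x(t),a(t)) = (x,a)]`. -/
noncomputable def occ {X A : Type*} [Fintype X] [Fintype A]
    (β : ℝ) (p : X → A → X → ℝ) (π : X → A → ℝ) (μ0 : X → ℝ) (x : X) (a : A) : ℝ :=
  (1 - β) * ∑' t : ℕ, β ^ t * jointLaw p π μ0 t x a

/-- given a probability measure `ν` on `X × A` with positive state marginal,
the policy `π_ν(a|x) = ν(x,a)/ν^X(x)`, under the stationarity conditions
`ν^X(x) = ∑_{(y,a)} p(x|y,a) π_ν(a|y) ν^X(y)` and `ν^X = μ_E`, induces (starting from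
`μ_E`) an occupation measure equal to `ν`. -/
theorem occ_of_disintegrated_policy_eq
    {X A : Type*} [Fintype X] [Fintype A]
    (β : ℝ) (hβ0 : 0 < β) (hβ1 : β < 1)
    (p : X → A → X → ℝ) (hp0 : ∀ y a x, 0 ≤ p y a x) (hp1 : ∀ y a, ∑ x, p y a x = 1)
    (μE : X → ℝ) (hμ0 : ∀ x, 0 ≤ μE x) (hμ1 : ∑ x, μE x = 1)
    (ν : X → A → ℝ) (hν0 : ∀ x a, 0 ≤ ν x a) (hν1 : ∑ x, ∑ a, ν x a = 1)
    (hmargpos : ∀ x, 0 < ∑ a, ν x a)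
    (πν : X → A → ℝ) (hπν : ∀ x a, πν x a = ν x a / ∑ b, ν x b)
    (hstat : ∀ x, ∑ a, ν x a = ∑ y, ∑ a, p y a x * πν y a * (∑ b, ν y b))
    (hmarg : ∀ x, ∑ a, ν x a = μE x) :
    ∀ x a, occ β p πν μE x a = ν x a := by
  have hstate : ∀ t, stateLaw p πν μE t = μE := by
    intro t
    induction t with
    | zero => rfl
    | succ t ih =>
      funext x
      show (∑ y, ∑ a, p y a x * πν y a * stateLaw p πν μE t y) = μE x
      rw [ih, ← hmarg x, hstat x]
      exact Finset.sum_congr rfl fun y _ => Finset.sum_congr rfl fun a _ => by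
        rw [hmarg y]
  intro x a
  have hν : πν x a * μE x = ν x a := by
    rw [hπν, ← hmarg x]
    field_simp
    exact mul_div_cancel_right₀ _ (hmargpos x).ne'
  unfold occ jointLaw
  simp only [hstate, hν]
  rw [tsum_mul_right, tsum_geometric_of_lt_one hβ0.le hβ1]
  rw [← mul_assoc, mul_inv_cancel₀ (by linarith : (1:ℝ) - β ≠ 0), one_mul]
end

section
/- The maps π ↦ ν_π (from policies to their normalized discounted occupation measures) and ν ↦ π_ν(a|x) = ν(x,a)/ν^X(x) define a bijective correspondence between feasible policies of the maximum causal entropy problem and feasible occupation measures of its convex reformulation, provided μ_E(x) > 0 for all x ∈ X. -/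
open scoped BigOperators

/-- Feasible policies of the maximum causal entropy problem `(OPT₁)`:
`π` is a policy making `μ_E` invariant and matching the discounted feature expectation. -/
def FeasiblePolicy {X A : Type*} [Fintype X] [Fintype A] {d : ℕ}
    (β : ℝ) (p : X → A → X → ℝ) (μE : X → ℝ)
    (f : X → A → EuclideanSpace ℝ (Fin d)) (Fv : EuclideanSpace ℝ (Fin d))
    (π : X → A → ℝ) : Prop :=
  (∀ x a, 0 ≤ π x a) ∧ (∀ x, ∑ a, π x a = 1) ∧
  (∀ x, μE x = ∑ y, ∑ a, p y a x * π y a * μE y) ∧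
  (∑' t : ℕ, β ^ t • ∑ x, ∑ a, jointLaw p π μE t x a • f x a) = Fv

/-- Feasible occupation measures of the convex reformulation `(OPT₂)`. -/
def FeasibleOcc {X A : Type*} [Fintype X] [Fintype A] {d : ℕ}
    (β : ℝ) (p : X → A → X → ℝ) (μE : X → ℝ)
    (f : X → A → EuclideanSpace ℝ (Fin d)) (Fv : EuclideanSpace ℝ (Fin d))
    (ν : X → A → ℝ) : Prop :=
  (∀ x a, 0 ≤ ν x a) ∧ (∑ x, ∑ a, ν x a = 1) ∧
  (∀ x, ∑ a, ν x a = μE x) ∧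
  (∀ x, μE x = ∑ y, ∑ a, p y a x * ν y a) ∧
  (1 / (1 - β)) • (∑ x, ∑ a, ν x a • f x a) = Fv
lemma stateLaw_invariant {X A : Type*} [Fintype X] [Fintype A]
    (p : X → A → X → ℝ) (π : X → A → ℝ) (μE : X → ℝ)
    (hinv : ∀ x, μE x = ∑ y, ∑ a, p y a x * π y a * μE y) :
    ∀ t, stateLaw p π μE t = μE := by
  intro t
  induction t with
  | zero => rfl
  | succ t ih =>
      funext x
      show (∑ y, ∑ a, p y a x * π y a * stateLaw p π μE t y) = μE x
      rw [ih]; exact (hinv x).symm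

lemma occ_eq {X A : Type*} [Fintype X] [Fintype A]
    (β : ℝ) (hβ0 : 0 ≤ β) (hβ1 : β < 1)
    (p : X → A → X → ℝ) (π : X → A → ℝ) (μE : X → ℝ)
    (hinv : ∀ x, μE x = ∑ y, ∑ a, p y a x * π y a * μE y)
    (x : X) (a : A) : occ β p π μE x a = π x a * μE x := by
  have h : ∀ t, jointLaw p π μE t x a = π x a * μE x := by
    intro t; unfold jointLaw; rw [stateLaw_invariant p π μE hinv t]
  unfold occ
  simp only [h]
  rw [tsum_mul_right, tsum_geometric_of_lt_one hβ0 hβ1, ← mul_assoc,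
    mul_inv_cancel₀ (sub_ne_zero.mpr hβ1.ne'), one_mul]
lemma tsum_geom_smul {d : ℕ} (β : ℝ) (hβ0 : 0 ≤ β) (hβ1 : β < 1)
    (v : EuclideanSpace ℝ (Fin d)) :
    (∑' t : ℕ, β ^ t • v) = (1 / (1 - β)) • v := by
  rw [Summable.tsum_smul_const (summable_geometric_of_lt_one hβ0 hβ1),
    tsum_geometric_of_lt_one hβ0 hβ1, one_div]

/-- provided `μ_E(x) > 0` for all `x`, the maps `π ↦ ν_π` and
`ν ↦ π_ν(a|x) = ν(x,a)/ν^X(x)` define a bijective correspondence between the feasible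
policies of the maximum causal entropy problem and the feasible occupation measures of
its convex reformulation. -/
theorem feasible_policy_occ_bijection
    {X A : Type*} [Fintype X] [Fintype A] {d : ℕ}
    (β : ℝ) (hβ0 : 0 < β) (hβ1 : β < 1)
    (p : X → A → X → ℝ) (hp0 : ∀ y a x, 0 ≤ p y a x) (hp1 : ∀ y a, ∑ x, p y a x = 1)
    (μE : X → ℝ) (hμ0 : ∀ x, 0 < μE x) (hμ1 : ∑ x, μE x = 1)
    (f : X → A → EuclideanSpace ℝ (Fin d)) (Fv : EuclideanSpace ℝ (Fin d)) :
    (∀ π : X → A → ℝ, FeasiblePolicy β p μE f Fv π →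
      FeasibleOcc β p μE f Fv (fun x a => occ β p π μE x a)) ∧
    (∀ ν : X → A → ℝ, FeasibleOcc β p μE f Fv ν →
      FeasiblePolicy β p μE f Fv (fun x a => ν x a / ∑ b, ν x b)) ∧
    (∀ π : X → A → ℝ, FeasiblePolicy β p μE f Fv π →
      ∀ x a, occ β p π μE x a / (∑ b, occ β p π μE x b) = π x a) ∧
    (∀ ν : X → A → ℝ, FeasibleOcc β p μE f Fv ν →
      ∀ x a, occ β p (fun y b => ν y b / ∑ b', ν y b') μE x a = ν x a) := by
  have hβ0' : (0:ℝ) ≤ β := hβ0.le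
  -- joint law constant for invariant policies
  have hjoint : ∀ (π : X → A → ℝ),
      (∀ x, μE x = ∑ y, ∑ a, p y a x * π y a * μE y) →
      ∀ t x a, jointLaw p π μE t x a = π x a * μE x := by
    intro π hinv t x a
    unfold jointLaw; rw [stateLaw_invariant p π μE hinv t]
  -- feature condition equivalence
  have hfeat : ∀ (π : X → A → ℝ),
      (∀ x, μE x = ∑ y, ∑ a, p y a x * π y a * μE y) →
      (∑' t : ℕ, β ^ t • ∑ x, ∑ a, jointLaw p π μE t x a • f x a)
        = (1 / (1 - β)) • (∑ x, ∑ a, (π x a * μE x) • f x a) := by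
    intro π hinv
    have : ∀ t : ℕ, (∑ x, ∑ a, jointLaw p π μE t x a • f x a)
        = ∑ x, ∑ a, (π x a * μE x) • f x a := by
      intro t
      refine Finset.sum_congr rfl fun x _ => Finset.sum_congr rfl fun a _ => ?_
      rw [hjoint π hinv t x a]
    simp only [this]
    exact tsum_geom_smul β hβ0' hβ1 _
  refine ⟨?_, ?_, ?_, ?_⟩
  · -- π feasible → occ feasible
    rintro π ⟨hπ0, hπ1, hπinv, hπf⟩
    have hocc : ∀ x a, occ β p π μE x a = π x a * μE x :=
      fun x a => occ_eq β hβ0' hβ1 p π μE hπinv x a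
    refine ⟨?_, ?_, ?_, ?_, ?_⟩
    · intro x a; simp only [hocc]; exact mul_nonneg (hπ0 x a) (hμ0 x).le
    · simp only [hocc]
      rw [← hμ1]
      refine Finset.sum_congr rfl fun x _ => ?_
      rw [← Finset.sum_mul, hπ1 x, one_mul]
    · intro x
      simp only [hocc]
      rw [← Finset.sum_mul, hπ1 x, one_mul]
    · intro x
      simp only [hocc]
      calc μE x = ∑ y, ∑ a, p y a x * π y a * μE y := hπinv x
        _ = ∑ y, ∑ a, p y a x * (π y a * μE y) := by
            refine Finset.sum_congr rfl fun y _ => Finset.sum_congr rfl fun a _ => ?_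
            ring
    · simp only [hocc]
      rw [← hfeat π hπinv]
      exact hπf
  · -- ν feasible → π_ν feasible
    rintro ν ⟨hν0, hν1, hνm, hνflow, hνf⟩
    have hm : ∀ x, (∑ b, ν x b) = μE x := hνm
    have hinv : ∀ x, μE x = ∑ y, ∑ a, p y a x * (ν y a / ∑ b, ν y b) * μE y := by
      intro x
      calc μE x = ∑ y, ∑ a, p y a x * ν y a := hνflow x
        _ = _ := by
          refine Finset.sum_congr rfl fun y _ => Finset.sum_congr rfl fun a _ => ?_
          rw [hm y]
          field_simp [(hμ0 y).ne']
    refine ⟨?_, ?_, ?_, ?_⟩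
    · intro x a
      exact div_nonneg (hν0 x a) (by rw [hm x]; exact (hμ0 x).le)
    · intro x
      rw [← Finset.sum_div, hm x, div_self (hμ0 x).ne']
    · exact hinv
    · rw [hfeat _ hinv, ← hνf]
      congr 1
      refine Finset.sum_congr rfl fun x _ => Finset.sum_congr rfl fun a _ => ?_
      rw [hm x]
      congr 1
      field_simp [(hμ0 x).ne']
  · -- occ / marginal = π
    rintro π ⟨hπ0, hπ1, hπinv, hπf⟩ x a
    have hocc : ∀ x a, occ β p π μE x a = π x a * μE x :=
      fun x a => occ_eq β hβ0' hβ1 p π μE hπinv x a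
    simp only [hocc]
    rw [← Finset.sum_mul, hπ1 x, one_mul]
    field_simp [(hμ0 x).ne']
  · -- occ of π_ν = ν
    rintro ν ⟨hν0, hν1, hνm, hνflow, hνf⟩ x a
    have hm : ∀ x, (∑ b, ν x b) = μE x := hνm
    have hinv : ∀ x, μE x = ∑ y, ∑ a, p y a x * (ν y a / ∑ b, ν y b) * μE y := by
      intro x
      calc μE x = ∑ y, ∑ a, p y a x * ν y a := hνflow x
        _ = _ := by
          refine Finset.sum_congr rfl fun y _ => Finset.sum_congr rfl fun a _ => ?_
          rw [hm y]
          field_simp [(hμ0 y).ne']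
    rw [occ_eq β hβ0' hβ1 p _ μE hinv x a, hm x]
    field_simp [(hμ0 x).ne']
end

section
/- If g : ℝ^m → ℝ is convex and L-smooth (has L-Lipschitz gradient), then gradient descent with constant step size γ ∈ (0, 1/L] starting at z₀ satisfies, for every k ≥ 1, g(z_k) − g(z*) ≤ ‖z₀ − z*‖² / (2γk), where z* is any minimizer, and the iterates remain in the ball {z : ‖z − z*‖ ≤ ‖z₀ − z*‖}. -/
open scoped BigOperators RealInnerProductSpace


variable {E : Type*} [NormedAddCommGroup E] [InnerProductSpace ℝ E] [CompleteSpace E]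

lemma curve_hasDerivAt {g : E → ℝ} {G : E → E} (hgrad : ∀ x, HasGradientAt g (G x) x)
    (x v : E) (t : ℝ) :
    HasDerivAt (fun s : ℝ => g (x + s • v)) ⟪G (x + t • v), v⟫ t := by
  have h1 : HasDerivAt (fun s : ℝ => x + s • v) v t := by
    simpa using ((hasDerivAt_id t).smul_const v).const_add x
  have h2 := (hasGradientAt_iff_hasFDerivAt.mp (hgrad (x + t • v)))
  have := h2.comp_hasDerivAt t h1
  simp [InnerProductSpace.toDual_apply_apply] at this
  exact this

/-- Descent lemma. -/
lemma descent_lemma {g : E → ℝ} {G : E → E} (hgrad : ∀ x, HasGradientAt g (G x) x)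
    {L : ℝ} (_hL : 0 ≤ L) (hLip : ∀ u v, ‖G u - G v‖ ≤ L * ‖u - v‖) (x y : E) :
    g y ≤ g x + ⟪G x, y - x⟫ + L / 2 * ‖y - x‖ ^ 2 := by
  set v := y - x with hv
  set ψ : ℝ → ℝ := fun t => g (x + t • v) - t * ⟪G x, v⟫ - L * t ^ 2 / 2 * ‖v‖ ^ 2 with hψ
  have hder : ∀ t : ℝ, HasDerivAt ψ (⟪G (x + t • v), v⟫ - ⟪G x, v⟫ - L * t * ‖v‖ ^ 2) t := by
    intro t
    have h1 := curve_hasDerivAt hgrad x v t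
    have h2 : HasDerivAt (fun t : ℝ => t * ⟪G x, v⟫) ⟪G x, v⟫ t := by
      simpa using (hasDerivAt_id t).mul_const (⟪G x, v⟫)
    have h3 : HasDerivAt (fun t : ℝ => L * t ^ 2 / 2 * ‖v‖ ^ 2) (L * t * ‖v‖ ^ 2) t := by
      have h := (((hasDerivAt_pow 2 t).const_mul L).div_const 2).mul_const (‖v‖ ^ 2)
      refine h.congr_deriv ?_
      push_cast
      ring
    exact (h1.sub h2).sub h3
  have hanti : AntitoneOn ψ (Set.Icc 0 1) := by
    apply antitoneOn_of_deriv_nonpos (convex_Icc 0 1)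
    · exact Continuous.continuousOn (Differentiable.continuous (fun t : ℝ => (hder t).differentiableAt))
    · intro t _; exact (hder t).differentiableAt.differentiableWithinAt
    · intro t ht
      rw [(hder t).deriv]
      have htpos : 0 ≤ t := le_of_lt (by simpa using (Set.mem_Ioo.mp (by simpa using ht)).1)
      have hCS : ⟪G (x + t • v) - G x, v⟫ ≤ ‖G (x + t • v) - G x‖ * ‖v‖ :=
        real_inner_le_norm _ _
      have hlip : ‖G (x + t • v) - G x‖ ≤ L * (t * ‖v‖) := by
        have := hLip (x + t • v) x
        simpa [norm_smul, abs_of_nonneg htpos, mul_assoc] using this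
      have : ⟪G (x + t • v), v⟫ - ⟪G x, v⟫ ≤ L * t * ‖v‖ ^ 2 := by
        have := hCS.trans (by nlinarith [norm_nonneg v] : ‖G (x + t • v) - G x‖ * ‖v‖ ≤ L * t * ‖v‖ ^ 2)
        simpa [inner_sub_left] using this
      linarith
  have h01 := hanti (Set.mem_Icc.mpr ⟨le_refl 0, zero_le_one⟩) (Set.mem_Icc.mpr ⟨zero_le_one, le_refl 1⟩) zero_le_one
  simp only [hψ, zero_smul, add_zero, one_smul, zero_pow, one_pow, mul_zero, mul_one, zero_mul, sub_zero] at h01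
  have : x + v = y := by rw [hv]; abel
  rw [this] at h01
  linarith

/-- Convexity lower bound. -/
lemma convex_grad_le {g : E → ℝ} {G : E → E} (hgrad : ∀ x, HasGradientAt g (G x) x)
    (hconv : ConvexOn ℝ Set.univ g) (x y : E) :
    g x + ⟪G x, y - x⟫ ≤ g y := by
  set v := y - x with hv
  set φ : ℝ → ℝ := fun t => g (x + t • v) with hφ
  have hφconv : ConvexOn ℝ Set.univ φ := by
    refine ⟨convex_univ, ?_⟩
    intro a _ b _ ta tb hta htb hab
    have hkey : x + (ta • a + tb • b) • v = ta • (x + a • v) + tb • (x + b • v) := by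
      have hx : x = ta • x + tb • x := by rw [← add_smul, hab, one_smul]
      rw [smul_add, smul_add, add_smul, smul_smul, smul_smul]
      nth_rewrite 1 [hx]
      abel
    simp only [hφ, smul_eq_mul]
    rw [show (ta * a + tb * b : ℝ) • v = (ta • a + tb • b : ℝ) • v by norm_num, hkey]
    exact hconv.2 (Set.mem_univ _) (Set.mem_univ _) hta htb hab
  have hslope := hφconv.le_slope_of_hasDerivAt (Set.mem_univ (0:ℝ)) (Set.mem_univ (1:ℝ))
    zero_lt_one (by simpa using curve_hasDerivAt hgrad x v 0)
  have h0 : φ 0 = g x := by simp [hφ]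
  have h1 : φ 1 = g y := by simp [hφ, hv]
  rw [slope_def_field] at hslope
  simp [h0, h1] at hslope
  linarith

/-- if `g` is convex and `L`-smooth (differentiable with `L`-Lipschitz
gradient `G`) and `z*` is a minimizer, then gradient descent with constant step size
`γ ∈ (0, 1/L]` satisfies `g(z_k) − g(z*) ≤ ‖z₀ − z*‖² / (2γk)` for every `k ≥ 1`, and
the iterates remain in the ball `{z : ‖z − z*‖ ≤ ‖z₀ − z*‖}`. -/
theorem gradient_descent_convex_rate
    {m : ℕ} (g : EuclideanSpace ℝ (Fin m) → ℝ)
    (G : EuclideanSpace ℝ (Fin m) → EuclideanSpace ℝ (Fin m))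
    (hgrad : ∀ x, HasGradientAt g (G x) x)
    (hconv : ConvexOn ℝ Set.univ g)
    (L : ℝ) (hL : 0 < L) (hLip : ∀ u v, ‖G u - G v‖ ≤ L * ‖u - v‖)
    (zstar : EuclideanSpace ℝ (Fin m)) (hmin : ∀ u, g zstar ≤ g u)
    (γ : ℝ) (hγ0 : 0 < γ) (hγL : γ ≤ 1 / L)
    (z : ℕ → EuclideanSpace ℝ (Fin m))
    (hiter : ∀ k, z (k + 1) = z k - γ • G (z k)) :
    (∀ k : ℕ, 1 ≤ k → g (z k) - g zstar ≤ ‖z 0 - zstar‖ ^ 2 / (2 * γ * k)) ∧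
    (∀ k : ℕ, ‖z k - zstar‖ ≤ ‖z 0 - zstar‖) := by
  have hγL' : γ * L ≤ 1 := by rwa [le_div_iff₀ hL] at hγL
  -- one-step descent
  have hstep : ∀ k, g (z (k + 1)) ≤ g (z k) - γ / 2 * ‖G (z k)‖ ^ 2 := by
    intro k
    have hd := descent_lemma hgrad hL.le hLip (z k) (z (k + 1))
    rw [hiter k] at hd ⊢
    have h1 : z k - γ • G (z k) - z k = -(γ • G (z k)) := by abel
    rw [h1] at hd
    rw [inner_neg_right, real_inner_smul_right, real_inner_self_eq_norm_sq] at hd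
    rw [norm_neg, norm_smul, Real.norm_eq_abs, abs_of_nonneg hγ0.le, mul_pow] at hd
    nlinarith [mul_nonneg hγ0.le (sq_nonneg ‖G (z k)‖), mul_nonneg (mul_nonneg hγ0.le hγ0.le) (sq_nonneg ‖G (z k)‖), mul_le_of_le_one_left (mul_nonneg hγ0.le (sq_nonneg ‖G (z k)‖)) hγL']
  -- key inequality
  have hkey : ∀ k, g (z (k + 1)) - g zstar ≤
      (‖z k - zstar‖ ^ 2 - ‖z (k + 1) - zstar‖ ^ 2) / (2 * γ) := by
    intro k
    have hc := convex_grad_le hgrad hconv (z k) zstar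
    have hc' : g (z k) - g zstar ≤ ⟪G (z k), z k - zstar⟫ := by
      have : ⟪G (z k), zstar - z k⟫ = -⟪G (z k), z k - zstar⟫ := by
        rw [← inner_neg_right]; congr 1; abel
      rw [this] at hc; linarith
    have hnorm : ‖z (k + 1) - zstar‖ ^ 2 =
        ‖z k - zstar‖ ^ 2 - 2 * γ * ⟪G (z k), z k - zstar⟫ + γ ^ 2 * ‖G (z k)‖ ^ 2 := by
      rw [hiter k]
      have h1 : z k - γ • G (z k) - zstar = (z k - zstar) - γ • G (z k) := by abel
      rw [h1, norm_sub_sq_real, real_inner_smul_right, norm_smul, Real.norm_eq_abs,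
        abs_of_nonneg hγ0.le, mul_pow, real_inner_comm]
      ring
    have hs := hstep k
    rw [le_div_iff₀ (by positivity : (0:ℝ) < 2 * γ)]
    nlinarith
  -- norms decrease
  have hnd : ∀ k, ‖z (k + 1) - zstar‖ ≤ ‖z k - zstar‖ := by
    intro k
    have h1 := hkey k
    have h2 : (0:ℝ) ≤ g (z (k + 1)) - g zstar := sub_nonneg.mpr (hmin _)
    have h3 : (0:ℝ) ≤ (‖z k - zstar‖ ^ 2 - ‖z (k + 1) - zstar‖ ^ 2) / (2 * γ) := le_trans h2 h1
    have h4 : ‖z (k + 1) - zstar‖ ^ 2 ≤ ‖z k - zstar‖ ^ 2 := by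
      have := (le_div_iff₀ (by positivity : (0:ℝ) < 2 * γ)).mp h3
      linarith
    nlinarith [norm_nonneg (z (k + 1) - zstar), norm_nonneg (z k - zstar)]
  have hball : ∀ k, ‖z k - zstar‖ ≤ ‖z 0 - zstar‖ := by
    intro k
    induction k with
    | zero => exact le_refl _
    | succ n ih => exact le_trans (hnd n) ih
  refine ⟨?_, hball⟩
  -- g monotone along iterates
  have hgm : ∀ j k, j ≤ k → g (z k) ≤ g (z j) := by
    intro j k hjk
    induction k with
    | zero => simp_all
    | succ n ih =>
      rcases Nat.lt_or_ge j (n + 1) with h | h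
      · have := ih (Nat.lt_succ_iff.mp h)
        have hs := hstep n
        nlinarith [sq_nonneg ‖G (z n)‖]
      · have : j = n + 1 := le_antisymm hjk h
        rw [this]
  -- telescoping sum
  intro k hk
  have hsum : ∑ i ∈ Finset.range k, (g (z (i + 1)) - g zstar) ≤
      ‖z 0 - zstar‖ ^ 2 / (2 * γ) := by
    calc ∑ i ∈ Finset.range k, (g (z (i + 1)) - g zstar)
        ≤ ∑ i ∈ Finset.range k,
            (‖z i - zstar‖ ^ 2 - ‖z (i + 1) - zstar‖ ^ 2) / (2 * γ) :=
          Finset.sum_le_sum fun i _ => hkey i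
      _ = (∑ i ∈ Finset.range k,
            (‖z i - zstar‖ ^ 2 - ‖z (i + 1) - zstar‖ ^ 2)) / (2 * γ) := by
          rw [Finset.sum_div]
      _ = (‖z 0 - zstar‖ ^ 2 - ‖z k - zstar‖ ^ 2) / (2 * γ) := by
          rw [Finset.sum_range_sub' (fun i => ‖z i - zstar‖ ^ 2)]
      _ ≤ ‖z 0 - zstar‖ ^ 2 / (2 * γ) := by
          apply div_le_div_of_nonneg_right ?_ (by positivity)
          · nlinarith [sq_nonneg ‖z k - zstar‖]
  have hlb : (k : ℝ) * (g (z k) - g zstar) ≤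
      ∑ i ∈ Finset.range k, (g (z (i + 1)) - g zstar) := by
    have : ∀ i ∈ Finset.range k, g (z k) - g zstar ≤ g (z (i + 1)) - g zstar := by
      intro i hi
      have := hgm (i + 1) k (Finset.mem_range.mp hi)
      linarith
    calc (k : ℝ) * (g (z k) - g zstar)
        = ∑ _i ∈ Finset.range k, (g (z k) - g zstar) := by
          rw [Finset.sum_const, Finset.card_range, nsmul_eq_mul]
      _ ≤ _ := Finset.sum_le_sum this
  have hkpos : (0:ℝ) < (k : ℝ) := by exact_mod_cast hk
  rw [le_div_iff₀ (by positivity : (0:ℝ) < 2 * γ)] at hsum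
  rw [le_div_iff₀ (by positivity : (0:ℝ) < 2 * γ * k)]
  nlinarith [mul_le_mul_of_nonneg_right hlb (by positivity : (0:ℝ) ≤ 2 * γ)]
end
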